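/- Let M = p_i^{n_i} p_j^{n_j} p_k^{n_k} with p_i, p_j, p_k distinct primes, and let A ⊆ ℤ_M with Φ_M | A. Suppose there is a plane Π = Π(z, p_i^{n_i}) such that A ∩ Π = S_j ∪ S_k for disjoint sets S_j, S_k with S_j M-fibered in the p_j direction and S_k M-fibered in the p_k direction. Then for every z′ ∈ ℤ_M with (z−z′, M) = M/p_i, the set A ∩ Π(z′, p_i^{n_i}) admits a decomposition of the same kind: it equals S′_j ∪ S′_k for disjoint sets S′_j, S′_k with S′_j M-fibered in the p_j direction and S′_k M-fibered in the p_k direction. -/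

import Mathlib

open Polynomial

/-- The mask polynomial `A(X) = Σ_{a ∈ A} X^a` of a finite subset of `ZMod M`,
using the representatives in `{0, …, M-1}`. -/
noncomputable def maskPoly (M : ℕ) (A : Finset (ZMod M)) : Polynomial ℤ :=
  ∑ a ∈ A, X ^ a.val

/-- `Φ_s | A` : the `s`-th cyclotomic polynomial divides the mask polynomial of `A` in `ℤ[X]`. -/
def cycDvd (M s : ℕ) (A : Finset (ZMod M)) : Prop :=
  cyclotomic s ℤ ∣ maskPoly M A

/-- `A ⊕ B = ℤ_M` : every element of `ℤ_M` has a unique representation `a + b`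
with `a ∈ A` and `b ∈ B`. -/
def IsTiling (M : ℕ) (A B : Set (ZMod M)) : Prop :=
  ∀ z : ZMod M, ∃! ab : ZMod M × ZMod M, ab.1 ∈ A ∧ ab.2 ∈ B ∧ ab.1 + ab.2 = z

/-- The Coven–Meyerowitz property (T2): whenever `s_1, …, s_m` are prime powers dividing `M`,
powers of pairwise distinct primes, with `Φ_{s_t} | A` for each `t`, then `Φ_{s_1 ⋯ s_m} | A`. -/
def SatisfiesT2 (M : ℕ) (A : Finset (ZMod M)) : Prop :=
  ∀ (P : Finset ℕ) (e : ℕ → ℕ), P.Nonempty →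
    (∀ p ∈ P, p.Prime ∧ 1 ≤ e p ∧ p ^ e p ∣ M ∧ cycDvd M (p ^ e p) A) →
    cycDvd M (∏ p ∈ P, p ^ e p) A

/-- The `D`-grid through `x` in `ZMod M` : `Λ(x, D) = {y : D ∣ y - x}`. -/
def gridSet (M : ℕ) (x : ZMod M) (D : ℕ) : Set (ZMod M) :=
  {y : ZMod M | (D : ZMod M) ∣ (y - x)}

/-- `S` is fibered in the `p` direction on scale `M`: every element of `S` has its whole
fiber `Λ(s, M/p)` contained in `S`. -/
def Fibered (M p : ℕ) (S : Set (ZMod M)) : Prop :=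
  ∀ s ∈ S, gridSet M s (M / p) ⊆ S

/-- `Div_N(S)` : the set of values `(s - s', N) = gcd(s - s', N)` for `s, s' ∈ S`. -/
def DivSet (M N : ℕ) (S : Set (ZMod M)) : Set ℕ :=
  {m : ℕ | ∃ s ∈ S, ∃ s' ∈ S, Nat.gcd (s - s').val N = m}

/- ### Auxiliary lemmas -/

lemma dvdval {M g : ℕ} (hM : M ≠ 0) (hg : g ∣ M) {x : ZMod M} (h : (g : ZMod M) ∣ x) :
    g ∣ x.val := by
  haveI : NeZero M := ⟨hM⟩
  obtain ⟨c, hc⟩ := h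
  have : (x.val : ZMod M) = ((g * c.val : ℕ) : ZMod M) := by
    push_cast
    rw [ZMod.natCast_val, ZMod.natCast_val, ZMod.cast_id, ZMod.cast_id, hc]
  rw [ZMod.natCast_eq_natCast_iff'] at this
  rw [Nat.mod_eq_of_lt (ZMod.val_lt x)] at this
  rw [this]
  exact (Nat.dvd_mod_iff hg).mpr ⟨c.val, rfl⟩

lemma divstep {p n M s : ℕ} (hp : p.Prime) (hM : M ≠ 0) (hpn : p ^ n ∣ M) (hn : 1 ≤ n)
    (hs : s ∣ M) (hnot : ¬ p ^ n ∣ s) : s ∣ M / p := by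
  have hs0 : s ≠ 0 := fun h => hM (Nat.eq_zero_of_zero_dvd (h ▸ hs))
  have hpM : p ∣ M := dvd_trans (dvd_pow_self p (Nat.one_le_iff_ne_zero.mp hn)) hpn
  have hMp0 : M / p ≠ 0 := by
    have := Nat.div_pos (Nat.le_of_dvd (Nat.pos_of_ne_zero hM) hpM) hp.pos
    omega
  rw [← Nat.factorization_le_iff_dvd hs0 hMp0]
  intro q
  rw [Nat.factorization_div hpM]
  have hle : s.factorization ≤ M.factorization := (Nat.factorization_le_iff_dvd hs0 hM).mpr hs
  rcases eq_or_ne q p with rfl | hq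
  · have h1 : s.factorization q < n := by
      by_contra hcon
      exact hnot ((Nat.Prime.pow_dvd_iff_le_factorization hp hs0).mpr (by omega))
    have h2 : n ≤ M.factorization q := (Nat.Prime.pow_dvd_iff_le_factorization hp hM).mp hpn
    simp [Nat.Prime.factorization hp]
    omega
  · have := hle q
    simp [Nat.Prime.factorization hp, Finsupp.single_apply, hq.symm]
    omega

lemma natkey {pi pj pk ni nj nk M s : ℕ}
    (hpi : pi.Prime) (hpj : pj.Prime) (hpk : pk.Prime)
    (hij : pi ≠ pj) (hik : pi ≠ pk) (hjk : pj ≠ pk)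
    (hni : 1 ≤ ni) (hnj : 1 ≤ nj) (hnk : 1 ≤ nk)
    (hM : M = pi ^ ni * pj ^ nj * pk ^ nk)
    (hs : s ∣ M) (hne : s ≠ M) : s ∣ M / pi ∨ s ∣ M / pj ∨ s ∣ M / pk := by
  have hM0 : M ≠ 0 := by
    have : 0 < M := by
      rw [hM]
      exact Nat.mul_pos (Nat.mul_pos (pow_pos hpi.pos _) (pow_pos hpj.pos _)) (pow_pos hpk.pos _)
    omega
  have hdi : pi ^ ni ∣ M := ⟨pj ^ nj * pk ^ nk, by rw [hM, mul_assoc]⟩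
  have hdj : pj ^ nj ∣ M := ⟨pi ^ ni * pk ^ nk, by rw [hM]; ring⟩
  have hdk : pk ^ nk ∣ M := ⟨pi ^ ni * pj ^ nj, by rw [hM]; ring⟩
  by_contra hcon
  push_neg at hcon
  obtain ⟨h1, h2, h3⟩ := hcon
  have e1 : pi ^ ni ∣ s := by
    by_contra h; exact h1 (divstep hpi hM0 hdi hni hs h)
  have e2 : pj ^ nj ∣ s := by
    by_contra h; exact h2 (divstep hpj hM0 hdj hnj hs h)
  have e3 : pk ^ nk ∣ s := by
    by_contra h; exact h3 (divstep hpk hM0 hdk hnk hs h)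
  have cij : Nat.Coprime (pi ^ ni) (pj ^ nj) :=
    ((Nat.coprime_primes hpi hpj).mpr hij).pow _ _
  have cik : Nat.Coprime (pi ^ ni * pj ^ nj) (pk ^ nk) :=
    Nat.Coprime.mul (((Nat.coprime_primes hpi hpk).mpr hik).pow _ _)
      (((Nat.coprime_primes hpj hpk).mpr hjk).pow _ _)
  have : M ∣ s := by
    rw [hM]
    exact Nat.Coprime.mul_dvd_of_dvd_of_dvd cik
      (Nat.Coprime.mul_dvd_of_dvd_of_dvd cij e1 e2) e3
  exact hne (Nat.dvd_antisymm hs this)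

open AddMonoidAlgebra Finsupp in
lemma cuboid {M : ℕ} (hM : M ≠ 0) (A : Finset (ZMod M)) (hPhi : cycDvd M M A)
    (di dj dk : ℕ) (hprop : ∀ s ∈ M.properDivisors, s ∣ di ∨ s ∣ dj ∨ s ∣ dk)
    (y : ZMod M) :
    (if y - (di + dj + dk : ℕ) ∈ A then (1:ℚ) else 0)
      - (if y - (di + dj : ℕ) ∈ A then (1:ℚ) else 0)
      - (if y - (di + dk : ℕ) ∈ A then (1:ℚ) else 0)
      - (if y - (dj + dk : ℕ) ∈ A then (1:ℚ) else 0)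
      + (if y - (di : ℕ) ∈ A then (1:ℚ) else 0)
      + (if y - (dj : ℕ) ∈ A then (1:ℚ) else 0)
      + (if y - (dk : ℕ) ∈ A then (1:ℚ) else 0)
      - (if y ∈ A then (1:ℚ) else 0) = 0 := by
  haveI : NeZero M := ⟨hM⟩
  have hMpos : 0 < M := Nat.pos_of_ne_zero hM
  set Pq : ℚ[X] := (maskPoly M A).map (Int.castRingHom ℚ) with hPq
  have hdvd : (X ^ M - 1 : ℚ[X]) ∣ Pq * (X ^ di - 1) * (X ^ dj - 1) * (X ^ dk - 1) := by
    rw [← prod_cyclotomic_eq_X_pow_sub_one hMpos]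
    apply Finset.prod_dvd_of_coprime
    · intro s hs t ht hst
      exact cyclotomic.isCoprime_rat hst
    · intro s hs
      rcases eq_or_ne s M with rfl | hne
      · have h1 : cyclotomic s ℚ ∣ Pq := by
          have := Polynomial.map_dvd (Int.castRingHom ℚ) hPhi
          rwa [map_cyclotomic] at this
        exact (h1.mul_right _).mul_right _ |>.mul_right _
      · have hsd : s ∣ M := (Nat.mem_divisors.mp hs).1
        have hsp : s ∈ M.properDivisors :=
          Nat.mem_properDivisors.mpr ⟨hsd, lt_of_le_of_ne (Nat.le_of_dvd hMpos hsd) hne⟩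
        have key : ∀ d : ℕ, s ∣ d → cyclotomic s ℚ ∣ (X ^ d - 1 : ℚ[X]) := by
          intro d hd
          obtain ⟨m, rfl⟩ := hd
          calc cyclotomic s ℚ ∣ (X ^ s - 1 : ℚ[X]) := cyclotomic.dvd_X_pow_sub_one s ℚ
            _ ∣ (X ^ (s * m) - 1 : ℚ[X]) := by
                have := sub_dvd_pow_sub_pow (X ^ s : ℚ[X]) 1 m
                rwa [one_pow, ← pow_mul] at this
        rcases hprop s hsp with h | h | h
        · exact ((key di h).mul_left Pq).mul_right _ |>.mul_right _
        · exact (((key dj h).mul_left _)).mul_right _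
        · exact (key dk h).mul_left _
  obtain ⟨Q, hQ⟩ := hdvd
  set u : AddMonoidAlgebra ℚ (ZMod M) := AddMonoidAlgebra.single (1 : ZMod M) (1 : ℚ) with hu
  have happ := congrArg (Polynomial.aeval u) hQ
  simp only [map_mul, map_sub, map_one] at happ
  have hpow : ∀ d : ℕ, Polynomial.aeval u (X ^ d : ℚ[X])
      = AddMonoidAlgebra.single ((d : ZMod M)) (1 : ℚ) := by
    intro d
    rw [map_pow, aeval_X, hu, AddMonoidAlgebra.single_pow, one_pow, nsmul_eq_mul, mul_one]
  rw [hpow M, ZMod.natCast_self] at happ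
  have h00 : (AddMonoidAlgebra.single ((0:ZMod M)) (1 : ℚ)) = 1 := rfl
  rw [h00, sub_self, zero_mul] at happ
  rw [hpow di, hpow dj, hpow dk] at happ
  have hmask : Polynomial.aeval u (Pq) = ∑ a ∈ A, AddMonoidAlgebra.single (a : ZMod M) (1:ℚ) := by
    rw [hPq]
    unfold maskPoly
    rw [Polynomial.map_sum]
    rw [map_sum]
    refine Finset.sum_congr rfl fun a _ => ?_
    rw [Polynomial.map_pow, map_X, hpow a.val, ZMod.natCast_val, ZMod.cast_id]
  rw [hmask] at happ
  set mask : AddMonoidAlgebra ℚ (ZMod M) := ∑ a ∈ A, AddMonoidAlgebra.single (a : ZMod M) (1:ℚ)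
    with hmaskdef
  have hmul : ∀ g h : ZMod M,
      (AddMonoidAlgebra.single g (1:ℚ)) * AddMonoidAlgebra.single h 1
        = AddMonoidAlgebra.single (g + h) 1 := fun g h => by
    rw [AddMonoidAlgebra.single_mul_single, one_mul]
  have hexp : mask * (AddMonoidAlgebra.single ((di : ZMod M)) (1:ℚ) - 1)
      * (AddMonoidAlgebra.single ((dj : ZMod M)) (1:ℚ) - 1)
      * (AddMonoidAlgebra.single ((dk : ZMod M)) (1:ℚ) - 1)
      = mask * (AddMonoidAlgebra.single ((di : ZMod M)) (1:ℚ)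
            * AddMonoidAlgebra.single ((dj : ZMod M)) (1:ℚ)
            * AddMonoidAlgebra.single ((dk : ZMod M)) (1:ℚ))
        - mask * (AddMonoidAlgebra.single ((di : ZMod M)) (1:ℚ)
            * AddMonoidAlgebra.single ((dj : ZMod M)) (1:ℚ))
        - mask * (AddMonoidAlgebra.single ((di : ZMod M)) (1:ℚ)
            * AddMonoidAlgebra.single ((dk : ZMod M)) (1:ℚ))
        - mask * (AddMonoidAlgebra.single ((dj : ZMod M)) (1:ℚ)
            * AddMonoidAlgebra.single ((dk : ZMod M)) (1:ℚ))
        + mask * AddMonoidAlgebra.single ((di : ZMod M)) (1:ℚ)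
        + mask * AddMonoidAlgebra.single ((dj : ZMod M)) (1:ℚ)
        + mask * AddMonoidAlgebra.single ((dk : ZMod M)) (1:ℚ)
        - mask := by ring
  rw [hexp] at happ
  simp only [hmul] at happ
  have hy := congrArg (fun f : AddMonoidAlgebra ℚ (ZMod M) => f.coeff y) happ
  have hT : ∀ g : ZMod M, (mask * AddMonoidAlgebra.single g (1:ℚ)).coeff y
      = (if y - g ∈ A then (1:ℚ) else 0) := by
    intro g
    rw [hmaskdef, Finset.sum_mul]
    simp only [hmul]
    rw [AddMonoidAlgebra.coeff_sum, Finsupp.finset_sum_apply]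
    simp only [AddMonoidAlgebra.coeff_single, Finsupp.single_apply, ← eq_sub_iff_add_eq]
    rw [Finset.sum_ite_eq' A (y - g) (fun _ => (1:ℚ))]
  have hT0 : mask.coeff y = (if y ∈ A then (1:ℚ) else 0) := by
    have := hT 0
    rwa [h00, mul_one, sub_zero] at this
  have hy2 : (mask * AddMonoidAlgebra.single ((di:ZMod M) + dj + dk) (1:ℚ)).coeff y
      - (mask * AddMonoidAlgebra.single ((di:ZMod M) + dj) (1:ℚ)).coeff y
      - (mask * AddMonoidAlgebra.single ((di:ZMod M) + dk) (1:ℚ)).coeff y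
      - (mask * AddMonoidAlgebra.single ((dj:ZMod M) + dk) (1:ℚ)).coeff y
      + (mask * AddMonoidAlgebra.single ((di:ZMod M)) (1:ℚ)).coeff y
      + (mask * AddMonoidAlgebra.single ((dj:ZMod M)) (1:ℚ)).coeff y
      + (mask * AddMonoidAlgebra.single ((dk:ZMod M)) (1:ℚ)).coeff y
      - mask.coeff y = 0 := hy
  simp only [hT, hT0] at hy2
  push_cast
  linarith [hy2]

/-- **Flat cuboids.** Let `M = p_i^{n_i} p_j^{n_j} p_k^{n_k}` and `A ⊆ ℤ_M`
with `Φ_M | A`. If on the plane `Π(z, p_i^{n_i})` the set `A ∩ Π` decomposes as a disjoint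
union `S_j ∪ S_k` with `S_j` `M`-fibered in the `p_j` direction and `S_k` `M`-fibered in the
`p_k` direction, then the same holds on every parallel plane `Π(z', p_i^{n_i})` with
`(z - z', M) = M/p_i`. -/
theorem statement9
    (pi pj pk : ℕ) (hpi : pi.Prime) (hpj : pj.Prime) (hpk : pk.Prime)
    (hij : pi ≠ pj) (hik : pi ≠ pk) (hjk : pj ≠ pk)
    (ni nj nk : ℕ) (hni : 1 ≤ ni) (hnj : 1 ≤ nj) (hnk : 1 ≤ nk)
    (M : ℕ) (hM : M = pi ^ ni * pj ^ nj * pk ^ nk)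
    (A : Finset (ZMod M)) (hPhiM : cycDvd M M A)
    (z : ZMod M) (Sj Sk : Set (ZMod M))
    (hsplit : (A : Set (ZMod M)) ∩ gridSet M z (pi ^ ni) = Sj ∪ Sk)
    (hdisj : Disjoint Sj Sk)
    (hfj : Fibered M pj Sj) (hfk : Fibered M pk Sk) :
    ∀ z' : ZMod M, Nat.gcd (z - z').val M = M / pi →
      ∃ Sj' Sk' : Set (ZMod M),
        (A : Set (ZMod M)) ∩ gridSet M z' (pi ^ ni) = Sj' ∪ Sk' ∧
        Disjoint Sj' Sk' ∧ Fibered M pj Sj' ∧ Fibered M pk Sk' := by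
  intro z' hz'
  classical
  have hMpos : 0 < M := by
    rw [hM]
    exact Nat.mul_pos (Nat.mul_pos (pow_pos hpi.pos _) (pow_pos hpj.pos _)) (pow_pos hpk.pos _)
  have hM0 : M ≠ 0 := hMpos.ne'
  -- basic nat divisibilities
  have hdvdi : pi ^ ni ∣ M := ⟨pj ^ nj * pk ^ nk, by rw [hM, mul_assoc]⟩
  have hpiM : pi ∣ M := dvd_trans (dvd_pow_self pi (Nat.one_le_iff_ne_zero.mp hni)) hdvdi
  have hpjM : pj ∣ M := dvd_trans (dvd_pow_self pj (Nat.one_le_iff_ne_zero.mp hnj))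
    ⟨pi ^ ni * pk ^ nk, by rw [hM]; ring⟩
  have hpkM : pk ∣ M := dvd_trans (dvd_pow_self pk (Nat.one_le_iff_ne_zero.mp hnk))
    ⟨pi ^ ni * pj ^ nj, by rw [hM]; ring⟩
  have hMpjM : M / pj ∣ M := Nat.div_dvd_of_dvd hpjM
  have hMpkM : M / pk ∣ M := Nat.div_dvd_of_dvd hpkM
  have hMpiM : M / pi ∣ M := Nat.div_dvd_of_dvd hpiM
  have hpinij : pi ^ ni ∣ M / pj := by
    rw [Nat.dvd_div_iff_mul_dvd hpjM, mul_comm]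
    exact Nat.Coprime.mul_dvd_of_dvd_of_dvd
      (Nat.Coprime.pow_left ni ((Nat.coprime_primes hpi hpj).mpr hij)) hdvdi hpjM
  have hpinik : pi ^ ni ∣ M / pk := by
    rw [Nat.dvd_div_iff_mul_dvd hpkM, mul_comm]
    exact Nat.Coprime.mul_dvd_of_dvd_of_dvd
      (Nat.Coprime.pow_left ni ((Nat.coprime_primes hpi hpk).mpr hik)) hdvdi hpkM
  -- the planar four-point identity on the plane of z
  have planar : ∀ y0 : ZMod M, y0 ∈ gridSet M z (pi ^ ni) → ∀ dj dk : ℕ,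
      M / pj ∣ dj → M / pk ∣ dk →
      (if y0 ∈ A then (1:ℚ) else 0) - (if y0 + (dj : ZMod M) ∈ A then (1:ℚ) else 0)
        - (if y0 + (dk : ZMod M) ∈ A then (1:ℚ) else 0)
        + (if y0 + (dj : ZMod M) + (dk : ZMod M) ∈ A then (1:ℚ) else 0) = 0 := by
    intro y0 hy0 dj dk hdj hdk
    have hjplane : pi ^ ni ∣ dj := hpinij.trans hdj
    have hkplane : pi ^ ni ∣ dk := hpinik.trans hdk
    have hmem : ∀ (w : ZMod M) (d : ℕ), pi ^ ni ∣ d → w ∈ gridSet M z (pi ^ ni) →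
        w + (d : ZMod M) ∈ gridSet M z (pi ^ ni) := by
      intro w d hd hw
      show ((pi ^ ni : ℕ) : ZMod M) ∣ (w + (d : ZMod M)) - z
      rw [show (w + (d : ZMod M)) - z = (w - z) + (d : ZMod M) by ring]
      exact dvd_add hw (Nat.cast_dvd_cast hd)
    have m0 : y0 ∈ gridSet M z (pi ^ ni) := hy0
    have m1 := hmem y0 dj hjplane m0
    have m2 := hmem y0 dk hkplane m0
    have m3 := hmem (y0 + (dj : ZMod M)) dk hkplane m1
    have hFsplit : ∀ w : ZMod M, w ∈ gridSet M z (pi ^ ni) →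
        (if w ∈ A then (1:ℚ) else 0)
          = (if w ∈ Sj then (1:ℚ) else 0) + (if w ∈ Sk then (1:ℚ) else 0) := by
      intro w hw
      by_cases hA : w ∈ A
      · have hw2 : w ∈ Sj ∪ Sk := by
          rw [← hsplit]; exact ⟨hA, hw⟩
        rcases hw2 with h | h
        · have h2 : w ∉ Sk := fun h' => (Set.disjoint_left.mp hdisj h h')
          simp [hA, h, h2]
        · have h2 : w ∉ Sj := fun h' => (Set.disjoint_left.mp hdisj h' h)
          simp [hA, h, h2]
      · have h1 : w ∉ Sj := fun h => hA (by
          have : w ∈ (A : Set (ZMod M)) ∩ gridSet M z (pi ^ ni) := by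
            rw [hsplit]; exact Or.inl h
          exact this.1)
        have h2 : w ∉ Sk := fun h => hA (by
          have : w ∈ (A : Set (ZMod M)) ∩ gridSet M z (pi ^ ni) := by
            rw [hsplit]; exact Or.inr h
          exact this.1)
        simp [hA, h1, h2]
    have hinvJ : ∀ w w' : ZMod M, ((M / pj : ℕ) : ZMod M) ∣ (w' - w) → ((w ∈ Sj) ↔ (w' ∈ Sj)) := by
      intro w w' hd
      constructor
      · intro hw; exact hfj w hw hd
      · intro hw'
        refine hfj w' hw' ?_
        show ((M / pj : ℕ) : ZMod M) ∣ w - w'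
        have := dvd_neg.mpr hd
        rwa [neg_sub] at this
    have hinvK : ∀ w w' : ZMod M, ((M / pk : ℕ) : ZMod M) ∣ (w' - w) → ((w ∈ Sk) ↔ (w' ∈ Sk)) := by
      intro w w' hd
      constructor
      · intro hw; exact hfk w hw hd
      · intro hw'
        refine hfk w' hw' ?_
        show ((M / pk : ℕ) : ZMod M) ∣ w - w'
        have := dvd_neg.mpr hd
        rwa [neg_sub] at this
    have cdj : ((M / pj : ℕ) : ZMod M) ∣ ((dj : ZMod M)) := Nat.cast_dvd_cast hdj
    have cdk : ((M / pk : ℕ) : ZMod M) ∣ ((dk : ZMod M)) := Nat.cast_dvd_cast hdk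
    have eJ1 : (if y0 ∈ Sj then (1:ℚ) else 0) = (if y0 + (dj : ZMod M) ∈ Sj then (1:ℚ) else 0) := by
      simp only [hinvJ y0 (y0 + (dj : ZMod M)) (by rwa [add_sub_cancel_left])]
    have eJ2 : (if y0 + (dk : ZMod M) ∈ Sj then (1:ℚ) else 0)
        = (if y0 + (dj : ZMod M) + (dk : ZMod M) ∈ Sj then (1:ℚ) else 0) := by
      simp only [hinvJ (y0 + (dk : ZMod M)) (y0 + (dj : ZMod M) + (dk : ZMod M))
        (by rw [show y0 + (dj:ZMod M) + (dk:ZMod M) - (y0 + (dk:ZMod M)) = (dj:ZMod M) by ring]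
            exact cdj)]
    have eK1 : (if y0 ∈ Sk then (1:ℚ) else 0) = (if y0 + (dk : ZMod M) ∈ Sk then (1:ℚ) else 0) := by
      simp only [hinvK y0 (y0 + (dk : ZMod M)) (by rwa [add_sub_cancel_left])]
    have eK2 : (if y0 + (dj : ZMod M) ∈ Sk then (1:ℚ) else 0)
        = (if y0 + (dj : ZMod M) + (dk : ZMod M) ∈ Sk then (1:ℚ) else 0) := by
      simp only [hinvK (y0 + (dj : ZMod M)) (y0 + (dj : ZMod M) + (dk : ZMod M))
        (by rwa [add_sub_cancel_left])]
    rw [hFsplit y0 m0, hFsplit _ m1, hFsplit _ m2, hFsplit _ m3]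
    linarith [eJ1, eJ2, eK1, eK2]
  -- the key engine lemma
  have engine : ∀ s : ZMod M, s ∈ A → s ∈ gridSet M z' (pi ^ ni) →
      ∀ c : ZMod M, ((M / pj : ℕ) : ZMod M) ∣ c - s → c ∉ A →
      ∀ b : ZMod M, ((M / pk : ℕ) : ZMod M) ∣ b - s →
      b ∈ A ∧ b + (c - s) ∉ A := by
    intro s hsA hsP c hcd hcA b hbd
    set di : ℕ := (z - z').val with hdi
    set dj : ℕ := (c - s).val with hdj
    set dk : ℕ := (b - s).val with hdk
    haveI : NeZero M := ⟨hM0⟩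
    have hdic : ((di : ℕ) : ZMod M) = z - z' := by rw [hdi, ZMod.natCast_val, ZMod.cast_id]
    have hdjc : ((dj : ℕ) : ZMod M) = c - s := by rw [hdj, ZMod.natCast_val, ZMod.cast_id]
    have hdkc : ((dk : ℕ) : ZMod M) = b - s := by rw [hdk, ZMod.natCast_val, ZMod.cast_id]
    have hdidvd : M / pi ∣ di := by
      rw [hdi, ← hz']
      exact Nat.gcd_dvd_left _ _
    have hdjdvd : M / pj ∣ dj := dvdval hM0 hMpjM hcd
    have hdkdvd : M / pk ∣ dk := dvdval hM0 hMpkM hbd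
    have hprop : ∀ t ∈ M.properDivisors, t ∣ di ∨ t ∣ dj ∨ t ∣ dk := by
      intro t ht
      obtain ⟨htM, hlt⟩ := Nat.mem_properDivisors.mp ht
      rcases natkey hpi hpj hpk hij hik hjk hni hnj hnk hM htM hlt.ne with h | h | h
      · exact Or.inl (h.trans hdidvd)
      · exact Or.inr (Or.inl (h.trans hdjdvd))
      · exact Or.inr (Or.inr (h.trans hdkdvd))
    have hq := cuboid hM0 A hPhiM di dj dk hprop
      ((s + (di : ZMod M) + (dj : ZMod M) + (dk : ZMod M)))
    rw [show s + (di:ZMod M) + (dj:ZMod M) + (dk:ZMod M) - ((di + dj + dk : ℕ) : ZMod M) = s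
        by push_cast; ring] at hq
    rw [show s + (di:ZMod M) + (dj:ZMod M) + (dk:ZMod M) - ((di + dj : ℕ) : ZMod M)
        = s + (dk : ZMod M) by push_cast; ring] at hq
    rw [show s + (di:ZMod M) + (dj:ZMod M) + (dk:ZMod M) - ((di + dk : ℕ) : ZMod M)
        = s + (dj : ZMod M) by push_cast; ring] at hq
    rw [show s + (di:ZMod M) + (dj:ZMod M) + (dk:ZMod M) - ((dj + dk : ℕ) : ZMod M)
        = s + (di : ZMod M) by push_cast; ring] at hq
    rw [show s + (di:ZMod M) + (dj:ZMod M) + (dk:ZMod M) - ((di : ℕ) : ZMod M)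
        = s + (dj : ZMod M) + (dk : ZMod M) by push_cast; ring] at hq
    rw [show s + (di:ZMod M) + (dj:ZMod M) + (dk:ZMod M) - ((dj : ℕ) : ZMod M)
        = s + (di : ZMod M) + (dk : ZMod M) by push_cast; ring] at hq
    rw [show s + (di:ZMod M) + (dj:ZMod M) + (dk:ZMod M) - ((dk : ℕ) : ZMod M)
        = s + (di : ZMod M) + (dj : ZMod M) by push_cast; ring] at hq
    have hplanemem : s + (di : ZMod M) ∈ gridSet M z (pi ^ ni) := by
      show ((pi ^ ni : ℕ) : ZMod M) ∣ (s + (di : ZMod M)) - z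
      rw [hdic, show s + (z - z') - z = s - z' by ring]
      exact hsP
    have hp := planar (s + (di : ZMod M)) hplanemem dj dk hdjdvd hdkdvd
    have key : (if s ∈ A then (1:ℚ) else 0) - (if s + (dk : ZMod M) ∈ A then (1:ℚ) else 0)
        - (if s + (dj : ZMod M) ∈ A then (1:ℚ) else 0)
        + (if s + (dj : ZMod M) + (dk : ZMod M) ∈ A then (1:ℚ) else 0) = 0 := by
      linarith [hq, hp]
    rw [hdjc, hdkc] at key
    rw [show s + (c - s) = c by ring, show s + (b - s) = b by ring,
      show c + (b - s) = b + (c - s) by ring] at key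
    constructor
    · by_contra hb
      simp only [if_pos hsA, if_neg hcA, if_neg hb] at key
      split_ifs at key <;> norm_num at key
    · intro hbc
      simp only [if_pos hsA, if_neg hcA, if_pos hbc] at key
      split_ifs at key <;> norm_num at key
  -- assemble the decomposition on the plane of z'
  set Sj' : Set (ZMod M) := {a : ZMod M | a ∈ (A : Set (ZMod M)) ∧ a ∈ gridSet M z' (pi ^ ni) ∧
    gridSet M a (M / pj) ⊆ (A : Set (ZMod M))} with hSj'
  set Sk' : Set (ZMod M) := ((A : Set (ZMod M)) ∩ gridSet M z' (pi ^ ni)) \ Sj' with hSk'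
  refine ⟨Sj', Sk', ?_, ?_, ?_, ?_⟩
  · ext a
    constructor
    · intro ⟨haA, haP⟩
      by_cases h : gridSet M a (M / pj) ⊆ (A : Set (ZMod M))
      · exact Or.inl ⟨haA, haP, h⟩
      · exact Or.inr ⟨⟨haA, haP⟩, fun hc => h hc.2.2⟩
    · rintro (h | h)
      · exact ⟨h.1, h.2.1⟩
      · exact h.1
  · exact Set.disjoint_left.mpr fun a ha hb => hb.2 ha
  · -- Sj' is fibered in the pj direction
    intro s hs b hb
    have hb' : ((M / pj : ℕ) : ZMod M) ∣ b - s := hb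
    refine ⟨hs.2.2 hb, ?_, ?_⟩
    · show ((pi ^ ni : ℕ) : ZMod M) ∣ b - z'
      rw [show b - z' = (b - s) + (s - z') by ring]
      exact dvd_add ((Nat.cast_dvd_cast hpinij).trans hb') hs.2.1
    · intro x hx
      refine hs.2.2 ?_
      show ((M / pj : ℕ) : ZMod M) ∣ x - s
      rw [show x - s = (x - b) + (b - s) by ring]
      exact dvd_add hx hb'
  · -- Sk' is fibered in the pk direction
    intro s hs b hb
    have hb' : ((M / pk : ℕ) : ZMod M) ∣ b - s := hb
    obtain ⟨⟨hsA, hsP⟩, hsnot⟩ := hs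
    have hnotsub : ¬ (gridSet M s (M / pj) ⊆ (A : Set (ZMod M))) := fun h =>
      hsnot ⟨hsA, hsP, h⟩
    obtain ⟨c, hc1, hc2⟩ := Set.not_subset.mp hnotsub
    obtain ⟨hbA, hbcA⟩ := engine s hsA hsP c hc1 hc2 b hb'
    have hbP : b ∈ gridSet M z' (pi ^ ni) := by
      show ((pi ^ ni : ℕ) : ZMod M) ∣ b - z'
      rw [show b - z' = (b - s) + (s - z') by ring]
      exact dvd_add ((Nat.cast_dvd_cast hpinik).trans hb') hsP
    refine ⟨⟨hbA, hbP⟩, fun hBj => hbcA (hBj.2.2 ?_)⟩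
    show ((M / pj : ℕ) : ZMod M) ∣ (b + (c - s)) - b
    rw [show (b + (c - s)) - b = c - s by ring]
    exact hc1
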